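/- Each component $g^{ij}$ of the $B_l$ orbit-space metric, viewed as a polynomial in $y^1,\dots,y^l$, has total degree at most $2$ in the variables $y^1,\dots,y^l$ (where each $y^p$ counts as degree $1$). -/

import Mathlib

open MvPolynomial

/-- `y^i = σ_i((x^1)^2, …, (x^l)^2)`. -/
noncomputable def yB (l : ℕ) (i : ℕ) : MvPolynomial (Fin l) ℚ :=
  ∑ s ∈ Finset.univ.powersetCard i, ∏ p ∈ s, (X p) ^ 2

/-- `g^{ij} = ∑_p ∂y^i/∂x^p ⬝ ∂y^j/∂x^p`. -/
noncomputable def gB (l : ℕ) (i j : ℕ) : MvPolynomial (Fin l) ℚ :=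
  ∑ p : Fin l, pderiv p (yB l i) * pderiv p (yB l j)

open Finset

lemma yB_zero (l : ℕ) : yB l 0 = 1 := by
  simp [yB]

lemma yB_eq_zero {l k : ℕ} (h : l < k) : yB l k = 0 := by
  unfold yB
  rw [Finset.powersetCard_eq_empty.2 (by simpa using h), sum_empty]

lemma yB_succ (n k : ℕ) :
    yB (n+1) (k+1) = rename Fin.castSucc (yB n (k+1))
      + (X (Fin.last n))^2 * rename Fin.castSucc (yB n k) := by
  unfold yB
  have hnot : Fin.last n ∉ (univ : Finset (Fin n)).map Fin.castSuccEmb := by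
    simp [Fin.castSuccEmb]
    intro x
    exact (Fin.castSucc_lt_last x).ne
  rw [show (univ : Finset (Fin (n+1))) = insert (Fin.last n) (univ.map Fin.castSuccEmb) by
        rw [Fin.univ_castSuccEmb]; rw [Finset.cons_eq_insert]]
  rw [Finset.powersetCard_succ_insert hnot]
  have hME : ∀ t : Finset (Fin n),
      (Finset.mapEmbedding Fin.castSuccEmb).toEmbedding t = t.map Fin.castSuccEmb := fun _ => rfl
  rw [Finset.sum_union]
  · congr 1
    · rw [Finset.powersetCard_map, Finset.sum_map]
      rw [map_sum]
      refine Finset.sum_congr rfl fun t _ => ?_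
      simp only [hME]
      rw [Finset.prod_map, map_prod]
      refine Finset.prod_congr rfl fun p _ => ?_
      simp only [map_pow, rename_X, Fin.coe_castSuccEmb]
    · have hinj : ∀ t ∈ powersetCard k (univ.map Fin.castSuccEmb), ∀ t' ∈ powersetCard k (univ.map Fin.castSuccEmb),
          insert (Fin.last n) t = insert (Fin.last n) t' → t = t' := by
        intro t ht t' ht' heq
        have h1 : Fin.last n ∉ t := fun hm => hnot ((Finset.mem_powersetCard.1 ht).1 hm)
        have h2 : Fin.last n ∉ t' := fun hm => hnot ((Finset.mem_powersetCard.1 ht').1 hm)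
        rw [← Finset.erase_insert h1, ← Finset.erase_insert h2, heq]
      rw [Finset.sum_image hinj, map_sum, Finset.mul_sum, Finset.powersetCard_map, Finset.sum_map]
      refine Finset.sum_congr rfl fun t ht => ?_
      simp only [hME]
      have htl : Fin.last n ∉ t.map Fin.castSuccEmb := by
        intro hmem
        rcases Finset.mem_map.1 hmem with ⟨x, _, hx⟩
        exact (Fin.castSucc_lt_last x).ne hx
      rw [Finset.prod_insert htl, Finset.prod_map, map_prod]
      congr 1
      refine Finset.prod_congr rfl fun p _ => ?_
      simp only [map_pow, rename_X, Fin.coe_castSuccEmb]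
  · rw [Finset.disjoint_left]
    intro t ht htmem
    have h1 : Fin.last n ∉ t := fun hm => hnot ((Finset.mem_powersetCard.1 ht).1 hm)
    rcases Finset.mem_image.1 htmem with ⟨s, _, hs⟩
    exact h1 (hs ▸ Finset.mem_insert_self _ _)
open Finset

def Ssum {A : Type*} [CommRing A] (u : ℕ → A) (i j : ℕ) : A :=
  ∑ p ∈ Finset.range (min i j),
    (((i : ℤ) + (j : ℤ) - 1 - 2 * (p : ℤ) : ℤ) : A) * (u p * u (i + j - 1 - p))

lemma Ssum_congr {A : Type*} [CommRing A] {u v : ℕ → A} (h : ∀ k, u k = v k) (i j : ℕ) :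
    Ssum u i j = Ssum v i j := by
  simp only [Ssum, h]

lemma map_Ssum {A B F : Type*} [CommRing A] [CommRing B] [FunLike F A B] [RingHomClass F A B]
    (φ : F) (u : ℕ → A) (i j : ℕ) :
    φ (Ssum u i j) = Ssum (fun k => φ (u k)) i j := by
  simp only [Ssum, map_sum, map_mul, map_intCast]

-- the `w²` part
lemma key2 {A : Type*} [CommRing A] (u : ℕ → A) (i j : ℕ) :
    ∑ p ∈ Finset.range (min (i+1) (j+1)),
      ((((i+1 : ℕ) : ℤ) + ((j+1 : ℕ) : ℤ) - 1 - 2 * (p : ℤ) : ℤ) : A) *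
        ((if p = 0 then 0 else u (p-1)) *
          (if (i+1) + (j+1) - 1 - p = 0 then 0 else u ((i+1) + (j+1) - 1 - p - 1)))
      = Ssum u i j := by
  rw [show min (i+1) (j+1) = min i j + 1 by omega, Finset.sum_range_succ']
  rw [if_pos (rfl : (0:ℕ) = 0)]
  simp only [zero_mul, mul_zero, add_zero]
  simp only [Ssum]
  refine Finset.sum_congr rfl fun p hp => ?_
  have hp' : p < min i j := Finset.mem_range.1 hp
  rw [if_neg (by omega : ¬ (p + 1 = 0)), if_neg (by omega : ¬ ((i+1)+(j+1)-1-(p+1) = 0))]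
  rw [show p + 1 - 1 = p by omega, show (i+1)+(j+1)-1-(p+1)-1 = i + j - 1 - p by omega]
  congr 1
  push_cast
  ring

-- the `w¹` part
lemma key1 {A : Type*} [CommRing A] (u : ℕ → A) (i j : ℕ) :
    ∑ p ∈ Finset.range (min (i+1) (j+1)),
      ((((i+1 : ℕ) : ℤ) + ((j+1 : ℕ) : ℤ) - 1 - 2 * (p : ℤ) : ℤ) : A) *
        (u p * (if (i+1) + (j+1) - 1 - p = 0 then 0 else u ((i+1) + (j+1) - 1 - p - 1)) +
         (if p = 0 then 0 else u (p-1)) * u ((i+1) + (j+1) - 1 - p))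
      = Ssum u (i+1) j + Ssum u i (j+1) + u i * u j := by
  set m := min i j with hm
  have hmin : min (i+1) (j+1) = m + 1 := by omega
  -- split LHS into two sums
  have hsplit : ∀ p ∈ Finset.range (m+1),
      ((((i+1 : ℕ) : ℤ) + ((j+1 : ℕ) : ℤ) - 1 - 2 * (p : ℤ) : ℤ) : A) *
        (u p * (if (i+1) + (j+1) - 1 - p = 0 then 0 else u ((i+1) + (j+1) - 1 - p - 1)) +
         (if p = 0 then 0 else u (p-1)) * u ((i+1) + (j+1) - 1 - p))
      = ((((i : ℤ) + (j : ℤ) - 2 * (p : ℤ) : ℤ) : A) * (u p * u (i + j - p)) + u p * u (i + j - p))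
        + ((((i+1 : ℕ) : ℤ) + ((j+1 : ℕ) : ℤ) - 1 - 2 * (p : ℤ) : ℤ) : A) *
            ((if p = 0 then 0 else u (p-1)) * u ((i+1) + (j+1) - 1 - p)) := by
    intro p hp
    have hp' : p ≤ m := by have := Finset.mem_range.1 hp; omega
    rw [if_neg (by omega : ¬ ((i+1)+(j+1)-1-p = 0))]
    rw [show (i+1)+(j+1)-1-p-1 = i + j - p by omega]
    push_cast
    ring
  rw [hmin, Finset.sum_congr rfl hsplit, Finset.sum_add_distrib, Finset.sum_add_distrib]
  -- second sum: peel p = 0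
  rw [Finset.sum_range_succ' (fun p =>
      ((((i+1 : ℕ) : ℤ) + ((j+1 : ℕ) : ℤ) - 1 - 2 * (p : ℤ) : ℤ) : A) *
        ((if p = 0 then 0 else u (p-1)) * u ((i+1) + (j+1) - 1 - p)))]
  rw [if_pos (rfl : (0:ℕ) = 0)]
  simp only [zero_mul, mul_zero, add_zero]
  have hT2 : ∀ p ∈ Finset.range m,
      ((((i+1 : ℕ) : ℤ) + ((j+1 : ℕ) : ℤ) - 1 - 2 * ((p+1 : ℕ) : ℤ) : ℤ) : A) *
        ((if p + 1 = 0 then 0 else u (p+1-1)) * u ((i+1) + (j+1) - 1 - (p+1)))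
      = (((i : ℤ) + (j : ℤ) - 2 * (p : ℤ) : ℤ) : A) * (u p * u (i + j - p)) - u p * u (i + j - p) := by
    intro p hp
    have hp' : p < m := Finset.mem_range.1 hp
    rw [if_neg (by omega : ¬ (p + 1 = 0)), show p + 1 - 1 = p by omega,
      show (i+1)+(j+1)-1-(p+1) = i + j - p by omega]
    push_cast
    ring
  rw [Finset.sum_congr rfl hT2, Finset.sum_sub_distrib]
  -- first sum: peel top
  rw [Finset.sum_range_succ (fun p => (((i : ℤ) + (j : ℤ) - 2 * (p : ℤ) : ℤ) : A) * (u p * u (i + j - p))),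
      Finset.sum_range_succ (fun p => u p * u (i + j - p))]
  -- now rewrite the RHS Ssum's
  have hR1 : Ssum u (i+1) j = ∑ p ∈ Finset.range (min (i+1) j),
      (((i : ℤ) + (j : ℤ) - 2 * (p : ℤ) : ℤ) : A) * (u p * u (i + j - p)) := by
    simp only [Ssum]
    refine Finset.sum_congr rfl fun p hp => ?_
    rw [show (i+1) + j - 1 - p = i + j - p by omega]
    congr 1
    push_cast; ring
  have hR2 : Ssum u i (j+1) = ∑ p ∈ Finset.range (min i (j+1)),
      (((i : ℤ) + (j : ℤ) - 2 * (p : ℤ) : ℤ) : A) * (u p * u (i + j - p)) := by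
    simp only [Ssum]
    refine Finset.sum_congr rfl fun p hp => ?_
    rw [show i + (j+1) - 1 - p = i + j - p by omega]
    congr 1
    push_cast; ring
  rw [hR1, hR2]
  rcases Nat.lt_trichotomy i j with h | h | h
  · rw [show min (i+1) j = m + 1 by omega, show min i (j+1) = m by omega,
      Finset.sum_range_succ (fun p => (((i : ℤ) + (j : ℤ) - 2 * (p : ℤ) : ℤ) : A) * (u p * u (i + j - p)))]
    rw [show i + j - m = j by omega, show m = i from by omega]
    ring
  · rw [show min (i+1) j = m by omega, show min i (j+1) = m by omega]
    rw [show i + j - m = j by omega]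
    have hc : ((((i : ℤ) + (j : ℤ) - 2 * (m : ℤ) : ℤ)) : A) = 0 := by
      have : ((i : ℤ) + (j : ℤ) - 2 * (m : ℤ)) = 0 := by omega
      rw [this]; exact Int.cast_zero
    rw [show m = i from by omega] at hc ⊢
    rw [hc]
    ring
  · rw [show min (i+1) j = m by omega, show min i (j+1) = m + 1 by omega,
      Finset.sum_range_succ (fun p => (((i : ℤ) + (j : ℤ) - 2 * (p : ℤ) : ℤ) : A) * (u p * u (i + j - p)))]
    rw [show i + j - m = i by omega, show m = j from by omega]
    ring
lemma key {A : Type*} [CommRing A] (w : A) (u : ℕ → A) (i j : ℕ) :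
    Ssum (fun k => u k + w * (if k = 0 then 0 else u (k-1))) (i+1) (j+1)
      = Ssum u (i+1) (j+1)
        + w * (Ssum u (i+1) j + Ssum u i (j+1) + u i * u j)
        + w^2 * Ssum u i j := by
  rw [← key1 u i j, ← key2 u i j]
  simp only [Ssum]
  rw [Finset.mul_sum, Finset.mul_sum, ← Finset.sum_add_distrib, ← Finset.sum_add_distrib]
  refine Finset.sum_congr rfl fun p hp => ?_
  ring

lemma pderiv_yB_castSucc (n k : ℕ) (p : Fin n) :
    pderiv p.castSucc (yB (n+1) (k+1))
      = rename Fin.castSucc (pderiv p (yB n (k+1)))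
        + (X (Fin.last n))^2 * rename Fin.castSucc (pderiv p (yB n k)) := by
  rw [yB_succ, map_add, pderiv_mul, pderiv_rename (Fin.castSucc_injective n),
    pderiv_rename (Fin.castSucc_injective n)]
  have hx : pderiv p.castSucc ((X (Fin.last n) : MvPolynomial (Fin (n+1)) ℚ)^2) = 0 := by
    rw [pderiv_pow, pderiv_X_of_ne (Fin.castSucc_lt_last p).ne', mul_zero]
  rw [hx, zero_mul, zero_add]

lemma pderiv_last_rename (n : ℕ) (q : MvPolynomial (Fin n) ℚ) :
    pderiv (Fin.last n) (rename Fin.castSucc q) = 0 := by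
  apply pderiv_eq_zero_of_notMem_vars
  intro hmem
  rcases Finset.mem_image.1 (vars_rename _ _ hmem) with ⟨x, _, hx⟩
  exact (Fin.castSucc_lt_last x).ne hx

lemma pderiv_yB_last (n k : ℕ) :
    pderiv (Fin.last n) (yB (n+1) (k+1))
      = 2 * X (Fin.last n) * rename Fin.castSucc (yB n k) := by
  rw [yB_succ, map_add, pderiv_mul, pderiv_last_rename, pderiv_last_rename, mul_zero,
    add_zero, zero_add, pderiv_pow, pderiv_X_self]
  push_cast
  ring

lemma gB_eq_Ssum (n : ℕ) : ∀ i j : ℕ, gB n i j = 4 * Ssum (yB n) i j := by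
  induction n with
  | zero =>
    intro i j
    have h1 : gB 0 i j = 0 := by simp [gB]
    have h2 : Ssum (yB 0) i j = 0 := by
      apply Finset.sum_eq_zero
      intro p hp
      have hp' : p < min i j := Finset.mem_range.1 hp
      rw [yB_eq_zero (by omega : 0 < i + j - 1 - p), mul_zero, mul_zero]
    rw [h1, h2, mul_zero]
  | succ n ih =>
    intro i j
    match i, j with
    | 0, j =>
      have h2 : Ssum (yB (n+1)) 0 j = 0 := by simp [Ssum]
      simp [gB, yB_zero, h2]
    | i+1, 0 =>
      have h2 : Ssum (yB (n+1)) (i+1) 0 = 0 := by simp [Ssum]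
      simp [gB, yB_zero, h2]
    | i+1, j+1 =>
      have hYB : ∀ k, yB (n+1) k = rename Fin.castSucc (yB n k)
          + (X (Fin.last n))^2 * (if k = 0 then 0 else rename Fin.castSucc (yB n (k-1))) := by
        intro k
        match k with
        | 0 => simp [yB_zero]
        | k+1 => rw [yB_succ]; simp
      unfold gB
      rw [Fin.sum_univ_castSucc]
      simp only [pderiv_yB_castSucc, pderiv_yB_last]
      have hsplit : ∑ p : Fin n,
          (rename Fin.castSucc (pderiv p (yB n (i+1)))
            + (X (Fin.last n))^2 * rename Fin.castSucc (pderiv p (yB n i)))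
          * (rename Fin.castSucc (pderiv p (yB n (j+1)))
            + (X (Fin.last n))^2 * rename Fin.castSucc (pderiv p (yB n j)))
          = rename Fin.castSucc (gB n (i+1) (j+1))
            + (X (Fin.last n))^2 * (rename Fin.castSucc (gB n (i+1) j)
                + rename Fin.castSucc (gB n i (j+1)))
            + ((X (Fin.last n))^2)^2 * rename Fin.castSucc (gB n i j) := by
        simp only [gB, map_sum, Finset.mul_sum, ← Finset.sum_add_distrib]
        refine Finset.sum_congr rfl fun p _ => ?_
        simp only [map_mul]
        ring
      rw [hsplit, ih (i+1) (j+1), ih (i+1) j, ih i (j+1), ih i j]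
      have hkey := key ((X (Fin.last n) : MvPolynomial (Fin (n+1)) ℚ)^2)
        (fun k => rename Fin.castSucc (yB n k)) i j
      rw [Ssum_congr hYB (i+1) (j+1), hkey]
      simp only [map_Ssum, map_mul, map_ofNat]
      ring
noncomputable def Yv (l : ℕ) (k : ℕ) : MvPolynomial (Fin l) ℚ :=
  if k = 0 then 1 else if h : k - 1 < l then X (⟨k-1, h⟩ : Fin l) else 0

lemma aeval_Yv (l k : ℕ) :
    aeval (fun p : Fin l => yB l ((p : ℕ) + 1)) (Yv l k) = yB l k := by
  unfold Yv
  split_ifs with h1 h2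
  · subst h1; rw [map_one, yB_zero]
  · rw [aeval_X]
    show yB l (((⟨k-1, h2⟩ : Fin l) : ℕ) + 1) = yB l k
    rw [show ((⟨k-1, h2⟩ : Fin l) : ℕ) = k - 1 from rfl]
    congr 1
    omega
  · rw [map_zero, yB_eq_zero (by omega : l < k)]

lemma Yv_totalDegree (l k : ℕ) : (Yv l k).totalDegree ≤ 1 := by
  unfold Yv
  split_ifs
  · rw [totalDegree_one]; omega
  · rw [totalDegree_X]
  · rw [totalDegree_zero]; omega


/-- Each `g^{ij}`, viewed as a polynomial in the variables `y^1, …, y^l` (the variable indexed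
by `p : Fin l` standing for `y^{p+1}`), has total degree at most `2`. -/
theorem stmt2 (l : ℕ) (a b : Fin l) :
    ∃ G : MvPolynomial (Fin l) ℚ,
      G.totalDegree ≤ 2 ∧
      aeval (fun p : Fin l => yB l ((p : ℕ) + 1)) G = gB l ((a : ℕ) + 1) ((b : ℕ) + 1) := by
  refine ⟨4 * Ssum (Yv l) ((a : ℕ) + 1) ((b : ℕ) + 1), ?_, ?_⟩
  · calc (4 * Ssum (Yv l) ((a : ℕ) + 1) ((b : ℕ) + 1)).totalDegree
        ≤ (4 : MvPolynomial (Fin l) ℚ).totalDegree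
            + (Ssum (Yv l) ((a : ℕ) + 1) ((b : ℕ) + 1)).totalDegree := totalDegree_mul _ _
      _ ≤ 2 := by
          have h4 : (4 : MvPolynomial (Fin l) ℚ).totalDegree = 0 := by
            rw [show (4 : MvPolynomial (Fin l) ℚ) = C (4 : ℚ) from (map_ofNat (C : ℚ →+* MvPolynomial (Fin l) ℚ) 4).symm,
              totalDegree_C]
          rw [h4, zero_add]
          refine le_trans (totalDegree_finset_sum _ _) (Finset.sup_le fun p _ => ?_)
          have hc : ((((((a:ℕ)+1 : ℕ) : ℤ) + (((b:ℕ)+1 : ℕ) : ℤ) - 1 - 2 * (p : ℤ) : ℤ)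
              : MvPolynomial (Fin l) ℚ)).totalDegree = 0 := by
            rw [show ((((((a:ℕ)+1 : ℕ) : ℤ) + (((b:ℕ)+1 : ℕ) : ℤ) - 1 - 2 * (p : ℤ) : ℤ))
                : MvPolynomial (Fin l) ℚ)
              = C ((((((a:ℕ)+1 : ℕ) : ℤ) + (((b:ℕ)+1 : ℕ) : ℤ) - 1 - 2 * (p : ℤ) : ℤ) : ℚ))
              from (map_intCast (C : ℚ →+* MvPolynomial (Fin l) ℚ) _).symm, totalDegree_C]
          calc (((((((a:ℕ)+1 : ℕ) : ℤ) + (((b:ℕ)+1 : ℕ) : ℤ) - 1 - 2 * (p : ℤ) : ℤ))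
                  : MvPolynomial (Fin l) ℚ)
                * (Yv l p * Yv l (((a:ℕ)+1) + (((b:ℕ)+1)) - 1 - p))).totalDegree
              ≤ _ + (Yv l p * Yv l (((a:ℕ)+1) + (((b:ℕ)+1)) - 1 - p)).totalDegree :=
                totalDegree_mul _ _
            _ ≤ _ + ((Yv l p).totalDegree
                  + (Yv l (((a:ℕ)+1) + (((b:ℕ)+1)) - 1 - p)).totalDegree) :=
                add_le_add_right (totalDegree_mul _ _) _
            _ ≤ 0 + (1 + 1) := by
                exact add_le_add (le_of_eq hc) (add_le_add (Yv_totalDegree _ _) (Yv_totalDegree _ _))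
            _ ≤ 2 := by omega
  · rw [map_mul, map_ofNat, map_Ssum, Ssum_congr (aeval_Yv l), gB_eq_Ssum]
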